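/- Let $\Theta$ be a $p\times p$ positive definite matrix partitioned by disjoint sets $A, B, C$ with $O^c = (A\times C)\cup(C\times A)$, and let $\tilde\Theta$ be the maximum-determinant completion (so $\tilde\Theta_{AA} = \Theta_{AA}-\Theta_{AC}\Theta_{CC}^{-1}\Theta_{CA}$, etc.). With $\gamma = \|\Theta_{AC}\|_\infty$, $\bar\gamma_{CC} = \|\Theta_{CC}^{-1}\|_\infty$ and $\mathrm{rd}_{AC}$ the maximum number of nonzero entries in any row of $\Theta_{AC}$, we have $\|\Theta_{AA} - \tilde\Theta_{AA}\|_\infty \leq \mathrm{rd}_{AC}^2\,\bar\gamma_{CC}\,\gamma^2$. -/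

import Mathlib

open Matrix

/-- Elementwise sup-norm of a real matrix: `‖A‖_∞ = max_{i,j} |A i j|`. -/
noncomputable def supNorm {m n : Type*} [Fintype m] [Fintype n]
    (A : Matrix m n ℝ) : ℝ :=
  ⨆ p : m × n, |A p.1 p.2|

/-- The submatrix of a `p×p` matrix with rows indexed by `E` and columns by `F`. -/
def msub {p : ℕ} (M : Matrix (Fin p) (Fin p) ℝ) (E F : Finset (Fin p)) :
    Matrix ↥E ↥F ℝ :=
  M.submatrix (fun i => (i : Fin p)) (fun j => (j : Fin p))

section aux
variable {m n : Type*} [Fintype m] [Fintype n]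

lemma supNorm_nonneg (A : Matrix m n ℝ) : 0 ≤ supNorm A :=
  Real.iSup_nonneg fun p => abs_nonneg _

lemma abs_le_supNorm (A : Matrix m n ℝ) (i : m) (j : n) : |A i j| ≤ supNorm A :=
  le_ciSup (f := fun q : m × n => |A q.1 q.2|) (Set.Finite.bddAbove (Set.finite_range _)) (i, j)

lemma supNorm_le {A : Matrix m n ℝ} {c : ℝ} (h0 : 0 ≤ c) (h : ∀ i j, |A i j| ≤ c) :
    supNorm A ≤ c :=
  Real.iSup_le (fun p => h p.1 p.2) h0

variable [DecidableEq m] [DecidableEq n]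

omit [DecidableEq m] [DecidableEq n] in
lemma posDef_equiv {M : Matrix n n ℝ} (hM : M.PosDef) (e : m ≃ n) :
    (M.submatrix e e).PosDef := by
  refine PosDef.of_dotProduct_mulVec_pos (hM.1.submatrix e) fun x hx => ?_
  have hx' : x ∘ e.symm ≠ 0 := by
    intro h; apply hx; ext i
    have := congrFun h (e i); simpa using this
  have := hM.dotProduct_mulVec_pos hx'
  convert this using 1
  rw [submatrix_mulVec_equiv]
  simp only [dotProduct, star_trivial, Function.comp_apply]
  exact Fintype.sum_equiv e _ _ (fun i => by simp)

omit [DecidableEq m] [DecidableEq n] in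
lemma posDef_block22 {M : Matrix (m ⊕ n) (m ⊕ n) ℝ} (hM : M.PosDef) :
    M.toBlocks₂₂.PosDef := by
  refine PosDef.of_dotProduct_mulVec_pos ?_ ?_
  · ext i j
    have := (hM.1.apply (Sum.inr j) (Sum.inr i)).symm
    simpa [toBlocks₂₂, conjTranspose_apply] using this
  · intro x hx
    have hy : (Sum.elim 0 x : m ⊕ n → ℝ) ≠ 0 := by
      intro h; apply hx; ext i; exact congrFun h (Sum.inr i)
    have := hM.dotProduct_mulVec_pos hy
    convert this using 1
    simp [dotProduct, Fintype.sum_sum_type, mulVec, toBlocks₂₂]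

lemma schur_aux {M : Matrix (m ⊕ n) (m ⊕ n) ℝ} (hM : M.PosDef) :
    (M⁻¹).toBlocks₁₁ *
      (M.toBlocks₁₁ - M.toBlocks₁₂ * (M.toBlocks₂₂)⁻¹ * M.toBlocks₂₁) = 1 := by
  letI iM : Invertible M := hM.isUnit.invertible
  letI iZ : Invertible M.toBlocks₂₂ := (posDef_block22 hM).isUnit.invertible
  letI iFB : Invertible (fromBlocks M.toBlocks₁₁ M.toBlocks₁₂ M.toBlocks₂₁ M.toBlocks₂₂) :=
    iM.copy _ (fromBlocks_toBlocks M)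
  letI iS := invertibleOfFromBlocks₂₂Invertible M.toBlocks₁₁ M.toBlocks₁₂ M.toBlocks₂₁ M.toBlocks₂₂
  have h := invOf_fromBlocks₂₂_eq M.toBlocks₁₁ M.toBlocks₁₂ M.toBlocks₂₁ M.toBlocks₂₂
  have h11 : (M⁻¹).toBlocks₁₁ =
      ⅟ (M.toBlocks₁₁ - M.toBlocks₁₂ * ⅟ M.toBlocks₂₂ * M.toBlocks₂₁) := by
    have : M⁻¹ = ⅟ (fromBlocks M.toBlocks₁₁ M.toBlocks₁₂ M.toBlocks₂₁ M.toBlocks₂₂) := by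
      rw [← invOf_eq_nonsing_inv]
      congr 1
    rw [this, h]
    rfl
  rw [h11, ← invOf_eq_nonsing_inv M.toBlocks₂₂]
  exact invOf_mul_self _

end aux

theorem madgq_AA_distortion_bound (p : ℕ) (Θ Θ' : Matrix (Fin p) (Fin p) ℝ)
    (hΘ : Θ.PosDef) (hΘ' : Θ'.PosDef) (A B C : Finset (Fin p))
    (hAB : Disjoint A B) (hAC : Disjoint A C) (hBC : Disjoint B C)
    (hcover : A ∪ B ∪ C = Finset.univ)
    (hz1 : ∀ i ∈ A, ∀ j ∈ C, Θ' i j = 0)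
    (hz2 : ∀ i ∈ C, ∀ j ∈ A, Θ' i j = 0)
    (hagree : ∀ i j : Fin p, ¬((i ∈ A ∧ j ∈ C) ∨ (i ∈ C ∧ j ∈ A)) →
      Θ'⁻¹ i j = Θ⁻¹ i j) :
    supNorm (msub Θ A A - msub Θ' A A) ≤
      ((A.sup fun i => {j : Fin p | j ∈ C ∧ Θ i j ≠ 0}.ncard : ℕ) : ℝ) ^ 2 *
        supNorm ((msub Θ C C)⁻¹) * supNorm (msub Θ A C) ^ 2 := by
  classical
  set D : Finset (Fin p) := A ∪ B with hD
  have hDC : Disjoint D C := by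
    rw [hD, Finset.disjoint_union_left]; exact ⟨hAC, hBC⟩
  -- the equivalence
  have hbij : Function.Bijective (Sum.elim (fun i => (i : Fin p)) (fun j => (j : Fin p)) :
      ↥D ⊕ ↥C → Fin p) := by
    constructor
    · rintro (a | a) (b | b) h <;> simp only [Sum.elim_inl, Sum.elim_inr] at h
      · exact congrArg Sum.inl (Subtype.ext h)
      · exact absurd (h ▸ a.2) (Finset.disjoint_left.mp hDC · b.2)
      · exact absurd (h ▸ a.2) (Finset.disjoint_left.mp hDC b.2)
      · exact congrArg Sum.inr (Subtype.ext h)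
    · intro x
      have hx : x ∈ A ∪ B ∪ C := hcover ▸ Finset.mem_univ x
      rcases Finset.mem_union.mp hx with h | h
      · exact ⟨Sum.inl ⟨x, h⟩, rfl⟩
      · exact ⟨Sum.inr ⟨x, h⟩, rfl⟩
  set e : ↥D ⊕ ↥C ≃ Fin p := Equiv.ofBijective _ hbij with he
  set N : Matrix (↥D ⊕ ↥C) (↥D ⊕ ↥C) ℝ := Θ.submatrix e e with hNdef
  set N' : Matrix (↥D ⊕ ↥C) (↥D ⊕ ↥C) ℝ := Θ'.submatrix e e with hN'def
  have hN : N.PosDef := posDef_equiv hΘ e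
  have hN' : N'.PosDef := posDef_equiv hΘ' e
  have h1 := schur_aux hN
  have h2 := schur_aux hN'
  -- Θ'⁻¹ and Θ⁻¹ agree on the D×D block
  have heq11 : (N'⁻¹).toBlocks₁₁ = (N⁻¹).toBlocks₁₁ := by
    ext i j
    show (N'⁻¹) (Sum.inl i) (Sum.inl j) = (N⁻¹) (Sum.inl i) (Sum.inl j)
    rw [hNdef, hN'def, inv_submatrix_equiv, inv_submatrix_equiv]
    refine hagree _ _ ?_
    rintro (⟨-, hj⟩ | ⟨hi, -⟩)
    · exact Finset.disjoint_right.mp hDC hj j.2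
    · exact Finset.disjoint_right.mp hDC hi i.2
  rw [heq11] at h2
  -- uniqueness of inverse: the two Schur complements coincide
  have hschur : N.toBlocks₁₁ - N.toBlocks₁₂ * (N.toBlocks₂₂)⁻¹ * N.toBlocks₂₁ =
      N'.toBlocks₁₁ - N'.toBlocks₁₂ * (N'.toBlocks₂₂)⁻¹ * N'.toBlocks₂₁ := by
    set S := N⁻¹ |>.toBlocks₁₁
    set X := N.toBlocks₁₁ - N.toBlocks₁₂ * (N.toBlocks₂₂)⁻¹ * N.toBlocks₂₁
    set Y := N'.toBlocks₁₁ - N'.toBlocks₁₂ * (N'.toBlocks₂₂)⁻¹ * N'.toBlocks₂₁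
    have hXS : X * S = 1 := mul_eq_one_comm.mp h1
    calc X = X * (S * Y) := by rw [h2, mul_one]
    _ = (X * S) * Y := by rw [mul_assoc]
    _ = Y := by rw [hXS, one_mul]
  -- inclusion of A into D
  have hADmem : ∀ i : ↥A, (i : Fin p) ∈ D := fun i => Finset.mem_union_left _ i.2
  -- the key entrywise identity
  have key : ∀ i j : ↥A, Θ i j - Θ' i j =
      ∑ l : ↥C, (∑ k : ↥C, Θ i k * ((msub Θ C C)⁻¹) k l) * Θ l j := by
    intro i j
    have := congrFun (congrFun hschur ⟨i, hADmem i⟩) ⟨j, hADmem j⟩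
    have hzero : (N'.toBlocks₁₂ * (N'.toBlocks₂₂)⁻¹ * N'.toBlocks₂₁)
        (⟨(i : Fin p), hADmem i⟩ : ↥D) (⟨(j : Fin p), hADmem j⟩ : ↥D) = 0 := by
      rw [mul_apply]
      refine Finset.sum_eq_zero fun l _ => ?_
      rw [mul_apply]
      have : ∀ k : ↥C, N'.toBlocks₁₂ (⟨(i : Fin p), hADmem i⟩ : ↥D) k = 0 := fun k =>
        hz1 _ i.2 _ k.2
      simp [this]
    simp only [Matrix.sub_apply, mul_apply] at this hzero ⊢
    have hZ : N.toBlocks₂₂ = msub Θ C C := rfl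
    rw [hZ] at this
    have hlhs : N.toBlocks₁₁ (⟨(i : Fin p), hADmem i⟩ : ↥D) (⟨(j : Fin p), hADmem j⟩ : ↥D) = Θ i j := rfl
    have hrhs : N'.toBlocks₁₁ (⟨(i : Fin p), hADmem i⟩ : ↥D) (⟨(j : Fin p), hADmem j⟩ : ↥D) = Θ' i j := rfl
    rw [hlhs, hrhs, hzero, sub_zero] at this
    rw [sub_eq_iff_eq_add] at this ⊢
    rw [add_comm] at this
    exact this
  -- notation
  set γ := supNorm (msub Θ A C) with hγ
  set γb := supNorm ((msub Θ C C)⁻¹) with hγb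
  have hγ0 : 0 ≤ γ := supNorm_nonneg _
  have hγb0 : 0 ≤ γb := supNorm_nonneg _
  set rd : ℕ := A.sup fun i => {j : Fin p | j ∈ C ∧ Θ i j ≠ 0}.ncard with hrd
  have hsym : ∀ a b : Fin p, Θ a b = Θ b a := fun a b => by
    have := hΘ.1.apply a b
    simpa using this.symm
  set s : ↥A → Finset ↥C := (fun a => Finset.univ.filter fun k : ↥C => Θ a k ≠ 0) with hs
  have support_card : ∀ i : ↥A, ((s i).card : ℝ) ≤ (rd : ℝ) := by
    intro i
    have h1 : {j : Fin p | j ∈ C ∧ Θ i j ≠ 0}.ncard = (C.filter fun j => Θ i j ≠ 0).card := by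
      rw [← Set.ncard_coe_finset]; congr 1; ext x; simp
    have h2 : (s i).card = (C.filter fun j => Θ i j ≠ 0).card :=
      Finset.card_bij (fun k _ => (k : Fin p))
        (by intro k hk; simp only [hs, Finset.mem_filter, Finset.mem_univ, true_and] at hk
            simp only [Finset.mem_filter]; exact ⟨k.2, hk⟩)
        (by intro a _ b _ hab; exact Subtype.ext hab)
        (by intro b hb; simp only [Finset.mem_filter] at hb
            exact ⟨⟨b, hb.1⟩, by simp [hs, hb.2], rfl⟩)
    have : {j : Fin p | j ∈ C ∧ Θ i j ≠ 0}.ncard ≤ rd := by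
      rw [hrd]
      exact Finset.le_sup (f := fun a => {j : Fin p | j ∈ C ∧ Θ a j ≠ 0}.ncard) i.2
    rw [h2, ← h1]
    exact_mod_cast this
  refine supNorm_le ?_ ?_
  · have : (0:ℝ) ≤ (rd:ℝ)^2 := by positivity
    have : (0:ℝ) ≤ γ^2 := by positivity
    exact mul_nonneg (mul_nonneg (by positivity) hγb0) this
  intro i j
  have hentry : (msub Θ A A - msub Θ' A A) i j = Θ i j - Θ' i j := rfl
  rw [hentry, key i j]
  set P := (msub Θ C C)⁻¹ with hP
  have hT : ∑ l : ↥C, (∑ k : ↥C, Θ i k * P k l) * Θ l j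
      = ∑ l : ↥C, ∑ k : ↥C, Θ i k * P k l * Θ l j :=
    Finset.sum_congr rfl fun l _ => by rw [Finset.sum_mul]
  have inner : ∀ l : ↥C, ∑ k : ↥C, Θ i k * P k l * Θ l j
      = ∑ k ∈ s i, Θ i k * P k l * Θ l j := fun l =>
    (Finset.sum_subset (Finset.subset_univ _) (fun k _ hk => by
      have h0 : Θ (i : Fin p) k = 0 := by
        simpa [hs] using hk
      simp [h0])).symm
  have outer : ∑ l : ↥C, ∑ k ∈ s i, Θ i k * P k l * Θ l j
      = ∑ l ∈ s j, ∑ k ∈ s i, Θ i k * P k l * Θ l j :=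
    (Finset.sum_subset (Finset.subset_univ _) (fun l _ hl => by
      have h0 : Θ (l : Fin p) j = 0 := by
        rw [hsym]
        simpa [hs] using hl
      exact Finset.sum_eq_zero fun k _ => by rw [h0, mul_zero])).symm
  rw [hT]
  simp_rw [inner]
  rw [outer]
  have hterm : ∀ l ∈ s j, ∀ k ∈ s i, |Θ i k * P k l * Θ l j| ≤ γ * γb * γ := by
    intro l _ k _
    rw [abs_mul, abs_mul]
    have e1 : |Θ (i : Fin p) k| ≤ γ := abs_le_supNorm (msub Θ A C) i k
    have e2 : |P k l| ≤ γb := abs_le_supNorm _ k l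
    have e3 : |Θ (l : Fin p) j| ≤ γ := by
      rw [hsym]
      exact abs_le_supNorm (msub Θ A C) j l
    exact mul_le_mul (mul_le_mul e1 e2 (abs_nonneg _) hγ0) e3 (abs_nonneg _)
      (mul_nonneg hγ0 hγb0)
  calc |∑ l ∈ s j, ∑ k ∈ s i, Θ i k * P k l * Θ l j|
      ≤ ∑ l ∈ s j, ∑ k ∈ s i, |Θ i k * P k l * Θ l j| :=
        (Finset.abs_sum_le_sum_abs _ _).trans
          (Finset.sum_le_sum fun l _ => Finset.abs_sum_le_sum_abs _ _)
    _ ≤ ∑ l ∈ s j, ∑ _k ∈ s i, (γ * γb * γ) :=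
        Finset.sum_le_sum fun l hl => Finset.sum_le_sum fun k hk => hterm l hl k hk
    _ = ((s j).card : ℝ) * (((s i).card : ℝ) * (γ * γb * γ)) := by
        simp [Finset.sum_const, nsmul_eq_mul]
    _ ≤ (rd : ℝ) * ((rd : ℝ) * (γ * γb * γ)) := by
        have hn : 0 ≤ γ * γb * γ := mul_nonneg (mul_nonneg hγ0 hγb0) hγ0
        exact mul_le_mul (support_card j)
          (mul_le_mul (support_card i) le_rfl hn (Nat.cast_nonneg _))
          (mul_nonneg (Nat.cast_nonneg _) hn) (Nat.cast_nonneg _)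
    _ = (rd : ℝ)^2 * γb * γ^2 := by ring
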